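/- There do not exist a measurable space Λ with a probability measure μ, a type X, functions A, B : S² → Λ → X (S² the unit sphere in ℝ³), and a family P : S² → X → ℝ with: (i) for every unit vector n and every x : X, P n x ∈ {-1, 1}; (ii) for every unit vector n, the maps λ ↦ P n (A n λ) and λ ↦ P n (B n λ) are measurable; and (iii) for all unit vectors a, b in ℝ³, ∫ P a (A a λ) · P b (B b λ) dμ(λ) = −⟪a,b⟫, where ⟪·,·⟫ is the Euclidean inner product on ℝ³. -/

import Mathlib

open MeasureTheory
open scoped RealInnerProductSpace

noncomputable def eprVec (x y z : ℝ) : EuclideanSpace ℝ (Fin 3) :=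
  (WithLp.equiv 2 (Fin 3 → ℝ)).symm ![x, y, z]

lemma eprVec_norm (x y z : ℝ) : ‖eprVec x y z‖ = Real.sqrt (x^2 + y^2 + z^2) := by
  simp [eprVec, EuclideanSpace.norm_eq, Fin.sum_univ_three, Real.norm_eq_abs, sq_abs]

lemma eprVec_inner (x y z x' y' z' : ℝ) :
    ⟪eprVec x y z, eprVec x' y' z'⟫ = x*x' + y*y' + z*z' := by
  simp [eprVec, PiLp.inner_apply, Fin.sum_univ_three, RCLike.inner_apply]
  ring

/-- Corollary 2: there is no local, deterministic generalized hidden variable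
model `(Λ, X, A, B, μ, P)` of the EPR-Bohm experiment reproducing the quantum
mechanical product expectation values after projection to `{-1, 1}`. -/
theorem no_generalized_hidden_variable_model :
    ¬ ∃ (Λ : Type) (_ : MeasurableSpace Λ) (μ : Measure Λ)
        (_ : IsProbabilityMeasure μ) (X : Type)
        (A B : EuclideanSpace ℝ (Fin 3) → Λ → X)
        (P : EuclideanSpace ℝ (Fin 3) → X → ℝ),
      (∀ n : EuclideanSpace ℝ (Fin 3), ‖n‖ = 1 → ∀ x : X, P n x ∈ ({-1, 1} : Set ℝ)) ∧
      (∀ n : EuclideanSpace ℝ (Fin 3), ‖n‖ = 1 →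
        Measurable (fun l => P n (A n l)) ∧ Measurable (fun l => P n (B n l))) ∧
      (∀ a b : EuclideanSpace ℝ (Fin 3), ‖a‖ = 1 → ‖b‖ = 1 →
        (∫ l, P a (A a l) * P b (B b l) ∂μ) = -⟪a, b⟫) := by
  rintro ⟨Λ, mΛ, μ, hμ, X, A, B, P, hP, hMeas, hE⟩
  set s : ℝ := (Real.sqrt 2)⁻¹ with hs
  have hs2 : s ^ 2 = 1 / 2 := by
    rw [hs, inv_pow, Real.sq_sqrt (by norm_num : (0:ℝ) ≤ 2)]; norm_num
  have hspos : 0 < s := by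
    rw [hs]; positivity
  set a : EuclideanSpace ℝ (Fin 3) := eprVec 1 0 0 with ha_def
  set a' : EuclideanSpace ℝ (Fin 3) := eprVec 0 1 0 with ha'_def
  set b : EuclideanSpace ℝ (Fin 3) := eprVec (-s) (-s) 0 with hb_def
  set b' : EuclideanSpace ℝ (Fin 3) := eprVec (-s) s 0 with hb'_def
  have norm1 : ∀ x y z : ℝ, x^2 + y^2 + z^2 = 1 → ‖eprVec x y z‖ = 1 := by
    intro x y z h
    rw [eprVec_norm, h, Real.sqrt_one]
  have ha : ‖a‖ = 1 := norm1 _ _ _ (by norm_num)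
  have ha' : ‖a'‖ = 1 := norm1 _ _ _ (by norm_num)
  have hb : ‖b‖ = 1 := norm1 _ _ _ (by nlinarith [hs2])
  have hb' : ‖b'‖ = 1 := norm1 _ _ _ (by nlinarith [hs2])
  -- integrability
  have hint : ∀ n m : EuclideanSpace ℝ (Fin 3), ‖n‖ = 1 → ‖m‖ = 1 →
      Integrable (fun l => P n (A n l) * P m (B m l)) μ := by
    intro n m hn hm
    refine ⟨((hMeas n hn).1.mul (hMeas m hm).2).aestronglyMeasurable, ?_⟩
    apply HasFiniteIntegral.of_bounded (C := 1)
    filter_upwards with l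
    have h1 := hP n hn (A n l)
    have h2 := hP m hm (B m l)
    simp only [Set.mem_insert_iff, Set.mem_singleton_iff] at h1 h2
    rcases h1 with h1 | h1 <;> rcases h2 with h2 | h2 <;>
      simp [h1, h2]
  -- CHSH pointwise bound
  have hpt : ∀ l : Λ, P a (A a l) * P b (B b l) + P a (A a l) * P b' (B b' l)
      + P a' (A a' l) * P b (B b l) - P a' (A a' l) * P b' (B b' l) ≤ 2 := by
    intro l
    have h1 := hP a ha (A a l)
    have h2 := hP a' ha' (A a' l)
    have h3 := hP b hb (B b l)
    have h4 := hP b' hb' (B b' l)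
    simp only [Set.mem_insert_iff, Set.mem_singleton_iff] at h1 h2 h3 h4
    rcases h1 with h1 | h1 <;> rcases h2 with h2 | h2 <;>
      rcases h3 with h3 | h3 <;> rcases h4 with h4 | h4 <;>
      rw [h1, h2, h3, h4] <;> norm_num
  -- integrate the bound
  have hle : (∫ l, (P a (A a l) * P b (B b l) + P a (A a l) * P b' (B b' l)
      + P a' (A a' l) * P b (B b l) - P a' (A a' l) * P b' (B b' l)) ∂μ) ≤ 2 := by
    have h2 : (∫ _, (2:ℝ) ∂μ) = 2 := by simp
    calc (∫ l, (P a (A a l) * P b (B b l) + P a (A a l) * P b' (B b' l)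
        + P a' (A a' l) * P b (B b l) - P a' (A a' l) * P b' (B b' l)) ∂μ)
        ≤ ∫ _, (2:ℝ) ∂μ := by
          apply integral_mono _ (integrable_const 2) hpt
          exact (((hint a b ha hb).add (hint a b' ha hb')).add
            (hint a' b ha' hb)).sub (hint a' b' ha' hb')
      _ = 2 := h2
  -- compute the integral via linearity and hE
  have hval : (∫ l, (P a (A a l) * P b (B b l) + P a (A a l) * P b' (B b' l)
      + P a' (A a' l) * P b (B b l) - P a' (A a' l) * P b' (B b' l)) ∂μ) = 4 * s := by
    have I1 : Integrable (fun l => P a (A a l) * P b (B b l)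
        + P a (A a l) * P b' (B b' l) + P a' (A a' l) * P b (B b l)) μ :=
      ((hint a b ha hb).add (hint a b' ha hb')).add (hint a' b ha' hb)
    have I2 : Integrable (fun l => P a (A a l) * P b (B b l)
        + P a (A a l) * P b' (B b' l)) μ :=
      (hint a b ha hb).add (hint a b' ha hb')
    rw [integral_sub I1 (hint a' b' ha' hb'),
      integral_add I2 (hint a' b ha' hb),
      integral_add (hint a b ha hb) (hint a b' ha hb'),
      hE a b ha hb, hE a b' ha hb', hE a' b ha' hb, hE a' b' ha' hb']
    rw [ha_def, ha'_def, hb_def, hb'_def, eprVec_inner, eprVec_inner, eprVec_inner,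
      eprVec_inner]
    ring
  rw [hval] at hle
  nlinarith [hs2, hspos]
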